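/- Let E be a finite-dimensional real inner product space, let (h₁, …, h_p) be a basis of E with ⟨h_i, h_j⟩ ≤ 0 for all i ≠ j, and let (e₁, …, e_p) be the dual basis, characterized by ⟨h_i, e_j⟩ = 1 if i = j and 0 otherwise. Then the open cone C = {x ∈ E : ⟨h_i, x⟩ > 0 for all i} is an open simplicial cone: C = {∑_{i=1}^p t_i e_i : t_i > 0 for all i}; and C is acute: for all x, y ∈ C one has ⟨x, y⟩ > 0. -/

import Mathlib

open scoped RealInnerProductSpace
open Finset

/-- A Weyl sector is an acute open simplicial cone: the cone determined by a basis
with pairwise nonpositive inner products consists exactly of the positive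
combinations of the dual basis vectors, and any two of its elements have positive
inner product. -/
theorem weyl_sector_acute_simplicial_cone
    {E : Type*} [NormedAddCommGroup E] [InnerProductSpace ℝ E]
    (p : ℕ) (hp : 0 < p) (b : Module.Basis (Fin p) ℝ E)
    (hobtuse : ∀ i j : Fin p, i ≠ j → ⟪b i, b j⟫ ≤ 0)
    (e : Fin p → E) (hdual : ∀ i j : Fin p, ⟪b i, e j⟫ = if i = j then 1 else 0) :
    {x : E | ∀ i, 0 < ⟪b i, x⟫} =
        {x : E | ∃ t : Fin p → ℝ, (∀ i, 0 < t i) ∧ x = ∑ i, t i • e i} ∧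
      ∀ x ∈ {x : E | ∀ i, 0 < ⟪b i, x⟫}, ∀ y ∈ {x : E | ∀ i, 0 < ⟪b i, x⟫},
        0 < ⟪x, y⟫ := by
  -- Every vector is the sum of its `⟪b i, ·⟫`-coordinates in the dual family `e`.
  have hrepr : ∀ x : E, x = ∑ i, ⟪b i, x⟫ • e i := by
    intro x
    set v := x - ∑ i, ⟪b i, x⟫ • e i with hv
    have hbv : ∀ j, ⟪b j, v⟫ = 0 := by
      intro j
      simp [hv, inner_sub_right, inner_sum, inner_smul_right, hdual, mul_ite]
    have hyv : ∀ y : E, ⟪y, v⟫ = 0 := by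
      intro y
      rw [← b.sum_repr y]
      simp only [sum_inner, real_inner_smul_left, hbv, mul_zero, Finset.sum_const_zero]
    have hv0 : v = 0 := by
      have := hyv v
      rwa [inner_self_eq_zero] at this
    have : x - ∑ i, ⟪b i, x⟫ • e i = 0 := hv0
    exact sub_eq_zero.mp this
  -- nonnegativity of `b`-coordinates for vectors in the closed cone
  have hcoef : ∀ x : E, (∀ i, 0 ≤ ⟪b i, x⟫) → ∀ i, 0 ≤ b.repr x i := by
    intro x hx i
    by_contra hneg
    push_neg at hneg
    set d : Fin p → ℝ := fun k => b.repr x k with hd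
    set S : Finset (Fin p) := univ.filter (fun k => d k < 0) with hS
    have hiS : i ∈ S := by simp [hS, hd, hneg]
    set xneg : E := ∑ k ∈ S, (-(d k)) • b k with hxneg
    have hx' : (∑ k ∈ Sᶜ, d k • b k) - xneg = x := by
      have h1 : xneg = -∑ k ∈ S, d k • b k := by
        simp [hxneg, neg_smul]
      rw [h1, sub_neg_eq_add]
      rw [Finset.sum_compl_add_sum S (fun k => d k • b k)]
      exact b.sum_repr x
    have hpos : ∀ k ∈ S, 0 < -(d k) := by
      intro k hk
      have : d k < 0 := (Finset.mem_filter.mp hk).2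
      linarith
    have h1 : 0 ≤ ⟪xneg, x⟫ := by
      rw [hxneg, sum_inner]
      refine Finset.sum_nonneg fun k hk => ?_
      rw [real_inner_smul_left]
      exact mul_nonneg (hpos k hk).le (hx k)
    have h2 : ⟪xneg, ∑ k ∈ Sᶜ, d k • b k⟫ ≤ 0 := by
      rw [hxneg, sum_inner]
      refine Finset.sum_nonpos fun k hk => ?_
      rw [real_inner_smul_left, inner_sum]
      refine mul_nonpos_of_nonneg_of_nonpos (hpos k hk).le ?_
      refine Finset.sum_nonpos fun j hj => ?_
      rw [real_inner_smul_right]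
      have hdj : 0 ≤ d j := by
        have := Finset.mem_compl.mp hj
        simp only [hS, Finset.mem_filter, Finset.mem_univ, true_and, not_lt] at this
        linarith
      have hkj : k ≠ j := by
        rintro rfl
        exact Finset.mem_compl.mp hj hk
      exact mul_nonpos_of_nonneg_of_nonpos hdj (hobtuse k j hkj)
    have h3 : ⟪xneg, xneg⟫ ≤ 0 := by
      have : xneg = (∑ k ∈ Sᶜ, d k • b k) - x := by
        rw [← hx']; abel
      calc ⟪xneg, xneg⟫ = ⟪xneg, ∑ k ∈ Sᶜ, d k • b k⟫ - ⟪xneg, x⟫ := by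
              rw [this, inner_sub_right]
        _ ≤ 0 := by linarith
    have hzero : xneg = 0 := by
      have := le_antisymm h3 real_inner_self_nonneg
      rwa [inner_self_eq_zero] at this
    set c : Fin p → ℝ := fun k => if k ∈ S then -(d k) else 0 with hc
    have hsum : ∑ k, c k • b k = 0 := by
      rw [← hzero, hxneg]
      rw [← Finset.sum_filter_add_sum_filter_not univ (fun k => k ∈ S)]
      have e1 : ∀ k ∈ univ.filter (fun k => k ∈ S), c k • b k = (-(d k)) • b k := by
        intro k hk
        simp only [Finset.mem_filter] at hk
        simp [hc, hk.2]
      have e2 : ∀ k ∈ univ.filter (fun k => ¬ k ∈ S), c k • b k = 0 := by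
        intro k hk
        simp only [Finset.mem_filter] at hk
        simp [hc, hk.2]
      rw [Finset.sum_congr rfl e1, Finset.sum_congr rfl e2, Finset.sum_const_zero, add_zero]
      congr 1
      ext k
      simp [hS]
    have := Fintype.linearIndependent_iff.mp b.linearIndependent c hsum i
    simp only [hc, hiS, if_pos] at this
    linarith
  -- nonnegativity of inner products of dual vectors
  have hee : ∀ i j : Fin p, 0 ≤ ⟪e i, e j⟫ := by
    intro i j
    have hd : ∀ k, 0 ≤ b.repr (e j) k := by
      refine hcoef (e j) fun k => ?_
      rw [hdual]
      split <;> norm_num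
    have : ⟪e i, e j⟫ = b.repr (e j) i := by
      conv_lhs => rw [← b.sum_repr (e j)]
      rw [inner_sum]
      rw [Finset.sum_eq_single i]
      · rw [real_inner_smul_right, real_inner_comm, hdual, if_pos rfl, mul_one]
      · intro k _ hk
        rw [real_inner_smul_right, real_inner_comm, hdual, if_neg hk, mul_zero]
      · intro h
        exact absurd (Finset.mem_univ i) h
    rw [this]
    exact hd i
  have hepos : ∀ i : Fin p, 0 < ⟪e i, e i⟫ := by
    intro i
    have hne : e i ≠ 0 := by
      intro h
      have := hdual i i
      rw [h, inner_zero_right, if_pos rfl] at this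
      norm_num at this
    by_contra h
    push_neg at h
    exact hne (real_inner_self_nonpos.mp h)
  have hNE : Nonempty (Fin p) := Fin.pos_iff_nonempty.mp hp
  constructor
  · ext x
    constructor
    · intro hx
      exact ⟨fun i => ⟪b i, x⟫, hx, hrepr x⟩
    · rintro ⟨t, ht, rfl⟩ i
      have : ⟪b i, ∑ j, t j • e j⟫ = t i := by
        rw [inner_sum, Finset.sum_eq_single i]
        · rw [real_inner_smul_right, hdual, if_pos rfl, mul_one]
        · intro k _ hk
          rw [real_inner_smul_right, hdual, if_neg (Ne.symm hk), mul_zero]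
        · intro h
          exact absurd (Finset.mem_univ i) h
      show 0 < ⟪b i, ∑ j, t j • e j⟫
      rw [this]
      exact ht i
  · intro x hx y hy
    have key : ∀ i, 0 < ⟪e i, y⟫ := by
      intro i
      conv_lhs => rw [show (0:ℝ) = 0 from rfl]
      rw [hrepr y, inner_sum]
      refine Finset.sum_pos' (fun j _ => ?_) ⟨i, Finset.mem_univ i, ?_⟩
      · rw [real_inner_smul_right]
        exact mul_nonneg (hy j).le (hee i j)
      · rw [real_inner_smul_right]
        exact mul_pos (hy i) (hepos i)
    rw [hrepr x, sum_inner]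
    refine Finset.sum_pos (fun i _ => ?_) Finset.univ_nonempty
    rw [real_inner_smul_left]
    exact mul_pos (hx i) (key i)
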